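/- For every real number c with 1/4 ≤ c ≤ 1, the Lebesgue measure (volume) of the set {(r,s,t) ∈ [0,1]³ : Q(r,s,t) ≤ c} equals c − (3c − 1/2)·ln c + (4c − 1)^{3/2}·(arctan(√(4c − 1)) − π/3). -/

import Mathlib

set_option maxHeartbeats 1000000

open MeasureTheory Real

noncomputable def Kfun (c w r : ℝ) : ℝ :=
  r^2/2 - c*r - 2*((r^3/3 - r^2/2 + c*r) * Real.log r - (r^3/9 - r^2/4 + c*r))
    + (r^3/3 - r^2/2 + c*r) * Real.log (r^2 - r + c)
    - ((2/9)*r^3 - (1/3)*r^2 + (4*c/3 - 1/6)*r + ((c-1/6)/2) * Real.log (r^2-r+c)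
       - (w^3/6) * Real.arctan ((2*r-1)/w))

lemma Kderiv (c w r : ℝ) (hr : 0 < r) (hq : 0 < r^2 - r + c) (hw : 0 < w)
    (hw2 : w^2 = 4*c - 1) :
    HasDerivAt (Kfun c w) (r^2 - (r^2-r+c) - (r^2-r+c)*(2*Real.log r - Real.log (r^2-r+c))) r := by
  have hq' : HasDerivAt (fun r : ℝ => r^2 - r + c) (2*r - 1) r := by
    simpa using (((hasDerivAt_pow 2 r).sub (hasDerivAt_id r)).add_const c)
  have hlogr : HasDerivAt Real.log r⁻¹ r := Real.hasDerivAt_log hr.ne'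
  have hlogq : HasDerivAt (fun r : ℝ => Real.log (r^2 - r + c)) ((2*r-1)/(r^2-r+c)) r := by
    simpa [div_eq_mul_inv] using (hq'.log hq.ne')
  have hP : HasDerivAt (fun r : ℝ => r^3/3 - r^2/2 + c*r) (r^2 - r + c) r := by
    have := (((hasDerivAt_pow 3 r).div_const 3).sub ((hasDerivAt_pow 2 r).div_const 2)).add
      ((hasDerivAt_id r).const_mul c)
    refine this.congr_deriv ?_; ring
  have harc : HasDerivAt (fun r : ℝ => (w^3/6) * Real.arctan ((2*r-1)/w))
      ((4*c-1)^2/(12*(r^2-r+c))) r := by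
    have hin : HasDerivAt (fun r : ℝ => (2*r-1)/w) (2/w) r := by
      simpa [div_eq_mul_inv] using
        ((((hasDerivAt_id r).const_mul 2).sub_const 1).mul_const w⁻¹)
    have := (hin.arctan).const_mul (w^3/6)
    refine this.congr_deriv ?_
    have h4q : 1 + ((2*r-1)/w)^2 = 4*(r^2-r+c)/w^2 := by
      field_simp; linear_combination hw2
    rw [h4q]
    have hw4 : w^4 = (4*c-1)^2 := by rw [show w^4 = (w^2)^2 by ring, hw2]
    field_simp [hq.ne', show r*(r-1)+c ≠ 0 by nlinarith]
    linear_combination 24*hw4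
  have hpoly : HasDerivAt (fun r : ℝ => (2/9)*r^3 - (1/3)*r^2 + (4*c/3 - 1/6)*r)
      ((2/3)*r^2 - (2/3)*r + (4*c/3 - 1/6)) r := by
    have := ((((hasDerivAt_pow 3 r).const_mul ((2:ℝ)/9)).sub
      ((hasDerivAt_pow 2 r).const_mul ((1:ℝ)/3))).add ((hasDerivAt_id r).const_mul (4*c/3 - 1/6)))
    refine this.congr_deriv ?_; ring
  have h1 : HasDerivAt (fun r : ℝ => r^2/2 - c*r) (r - c) r := by
    have := (((hasDerivAt_pow 2 r).div_const 2).sub ((hasDerivAt_id r).const_mul c))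
    refine this.congr_deriv ?_; ring
  have h2 : HasDerivAt (fun r : ℝ => (r^3/3 - r^2/2 + c*r) * Real.log r - (r^3/9 - r^2/4 + c*r))
      ((r^2 - r + c) * Real.log r + (r^3/3 - r^2/2 + c*r) * r⁻¹
        - (r^2/3 - r/2 + c)) r := by
    have ha := hP.mul hlogr
    have hb : HasDerivAt (fun r : ℝ => r^3/9 - r^2/4 + c*r) (r^2/3 - r/2 + c) r := by
      have := (((hasDerivAt_pow 3 r).div_const 9).sub ((hasDerivAt_pow 2 r).div_const 4)).add
        ((hasDerivAt_id r).const_mul c)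
      refine this.congr_deriv ?_; ring
    exact ha.sub hb
  have h3 := hP.mul hlogq
  have h4 := (hpoly.add (hlogq.const_mul ((c-1/6)/2))).sub harc
  have := ((h1.sub (h2.const_mul 2)).add h3).sub h4
  refine this.congr_deriv ?_
  field_simp [hq.ne', show r*(r-1)+c ≠ 0 by nlinarith]
  ring

lemma arctanid (w : ℝ) (hw : 0 < w) : Real.arctan ((w^2-1)/(2*w)) = 2 * Real.arctan w - π/2 := by
  have ha0 : 0 < Real.arctan w := by rw [← Real.arctan_zero]; exact Real.arctan_strictMono hw
  have ha2 : Real.arctan w < π/2 := Real.arctan_lt_pi_div_two w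
  have hsqrtpos : (0:ℝ) < Real.sqrt (1 + w^2) := Real.sqrt_pos.2 (by positivity)
  have hs : Real.sin (Real.arctan w) = w / Real.sqrt (1 + w^2) := Real.sin_arctan w
  have hc : Real.cos (Real.arctan w) = 1 / Real.sqrt (1 + w^2) := Real.cos_arctan w
  have hsq : Real.sqrt (1 + w^2) ^ 2 = 1 + w^2 := Real.sq_sqrt (by positivity)
  have key : (w^2-1)/(2*w) = Real.tan (2 * Real.arctan w - π/2) := by
    rw [Real.tan_eq_sin_div_cos, Real.sin_sub, Real.cos_sub, Real.sin_pi_div_two,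
      Real.cos_pi_div_two, Real.sin_two_mul, Real.cos_two_mul, hs, hc]
    field_simp
    nlinarith [hsq, sq_nonneg w]
  rw [key, Real.arctan_tan (by linarith) (by linarith)]

noncomputable def ftil (c r : ℝ) : ℝ :=
  r^2 - (r^2-r+c) - (r^2-r+c)*(2*Real.log r - Real.log (r^2-r+c))

lemma Jlemma (c : ℝ) (hc : 1/4 < c) (hc1 : c ≤ 1) :
    ∫ r in c..1, ftil c r =
      1/2 - c/2 + (3/2)*(c-1/6)*Real.log c
        - (4*c-1)^((3:ℝ)/2)/2 * (Real.arctan (Real.sqrt (4*c-1)) - π/3) := by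
  have hD : (0:ℝ) < 4*c - 1 := by linarith
  set w := Real.sqrt (4*c-1) with hwdef
  have hw : 0 < w := Real.sqrt_pos.2 hD
  have hw2 : w^2 = 4*c - 1 := Real.sq_sqrt hD.le
  have hcpos : (0:ℝ) < c := by linarith
  have hqpos : ∀ r : ℝ, 0 < r^2 - r + c := by
    intro r; nlinarith [sq_nonneg (r - 1/2)]
  have hderiv : ∀ r ∈ Set.uIcc c 1, HasDerivAt (Kfun c w) (ftil c r) r := by
    intro r hr
    rw [Set.uIcc_of_le hc1] at hr
    exact Kderiv c w r (lt_of_lt_of_le hcpos hr.1) (hqpos r) hw hw2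
  have hcont : ContinuousOn (ftil c) (Set.uIcc c 1) := by
    rw [Set.uIcc_of_le hc1]
    have hq : ContinuousOn (fun r : ℝ => r^2 - r + c) (Set.Icc c 1) := by fun_prop
    apply ContinuousOn.sub
    · apply ContinuousOn.sub (by fun_prop) hq
    · apply hq.mul
      apply ContinuousOn.sub
      · exact ContinuousOn.mul continuousOn_const
          (Real.continuousOn_log.comp (by fun_prop) (fun r hr => by
            simp only [Set.mem_compl_iff, Set.mem_singleton_iff]
            exact ne_of_gt (lt_of_lt_of_le hcpos hr.1)))
      · exact Real.continuousOn_log.comp hq (fun r hr => by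
          simp only [Set.mem_compl_iff, Set.mem_singleton_iff]
          exact ne_of_gt (hqpos r))
  have hint : IntervalIntegrable (ftil c) MeasureTheory.volume c 1 :=
    hcont.intervalIntegrable
  rw [intervalIntegral.integral_eq_sub_of_hasDerivAt hderiv hint]
  have hq1 : (1:ℝ)^2 - 1 + c = c := by ring
  have hqc : c^2 - c + c = c^2 := by ring
  have hlogc2 : Real.log (c^2) = 2 * Real.log c := by
    rw [show c^2 = c*c by ring, Real.log_mul hcpos.ne' hcpos.ne']; ring
  have h32 : (4*c-1)^((3:ℝ)/2) = w^3 := by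
    rw [hwdef, Real.sqrt_eq_rpow, ← Real.rpow_natCast ((4*c-1)^((1/2:ℝ))) 3,
      ← Real.rpow_mul hD.le]
    norm_num
  have harc1 : Real.arctan (1/w) = π/2 - Real.arctan w := by
    rw [one_div]; exact Real.arctan_inv_of_pos hw
  have harc2 : Real.arctan ((2*c-1)/w) = 2 * Real.arctan w - π/2 := by
    have : (2*c-1)/w = (w^2-1)/(2*w) := by
      rw [hw2]; field_simp; ring
    rw [this, arctanid w hw]
  simp only [Kfun, hq1, hqc, hlogc2, Real.log_one, h32]
  rw [show (2*1-1)/w = 1/w by norm_num, show (2*c-1:ℝ) = 2*c-1 by ring, harc1, harc2]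
  ring


noncomputable def hfun (c a b : ℝ) : ℝ := if c < a*b then (a*b - c)/(a+b-1) else 0

noncomputable def phi (c r : ℝ) : ℝ := if c < r then ftil c r else 0

lemma inner_s (c r : ℝ) (hc : 1/4 < c) (hr1 : r ≤ 1) (hrc : c < r) :
    ∫ s in (c/r)..1, (r*s - c)/(r+s-1) = ftil c r := by
  have hc0 : (0:ℝ) < c := by linarith
  have hr0 : (0:ℝ) < r := lt_trans hc0 hrc
  have hq : (0:ℝ) < r^2 - r + c := by nlinarith [sq_nonneg (r-1/2)]
  have hcr1 : c/r < 1 := (div_lt_one hr0).2 hrc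
  have hcrc : c/r = (c/r) := rfl
  have hden : ∀ s ∈ Set.uIcc (c/r) 1, 0 < r + s - 1 := by
    intro s hs
    rw [Set.uIcc_of_le hcr1.le] at hs
    have : c/r ≤ s := hs.1
    have : (r^2 - r + c)/r ≤ r + s - 1 := by
      rw [div_le_iff₀ hr0] at this ⊢
      nlinarith
    nlinarith [div_pos hq hr0]
  have hderiv : ∀ s ∈ Set.uIcc (c/r) 1,
      HasDerivAt (fun s => r*s - (r^2-r+c)*Real.log (r+s-1)) ((r*s - c)/(r+s-1)) s := by
    intro s hs
    have hd := hden s hs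
    have h1 : HasDerivAt (fun s : ℝ => r*s) r s := by
      simpa using (hasDerivAt_id s).const_mul r
    have h2 : HasDerivAt (fun s : ℝ => r+s-1) 1 s := by
      simpa using ((hasDerivAt_id s).const_add r).sub_const 1
    have h3 : HasDerivAt (fun s : ℝ => Real.log (r+s-1)) (1/(r+s-1)) s := by
      simpa [div_eq_mul_inv] using h2.log hd.ne'
    have := h1.sub ((h3.const_mul (r^2-r+c)))
    refine this.congr_deriv ?_
    field_simp
    ring
  have hcont : ContinuousOn (fun s => (r*s - c)/(r+s-1)) (Set.uIcc (c/r) 1) := by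
    apply ContinuousOn.div (by fun_prop) (by fun_prop)
    exact fun s hs => (hden s hs).ne'
  rw [intervalIntegral.integral_eq_sub_of_hasDerivAt hderiv hcont.intervalIntegrable]
  have e1 : r + 1 - 1 = r := by ring
  have e2 : r + c/r - 1 = (r^2-r+c)/r := by field_simp; ring
  have e3 : Real.log ((r^2-r+c)/r) = Real.log (r^2-r+c) - Real.log r :=
    Real.log_div hq.ne' hr0.ne'
  rw [e1, e2, e3]
  have : r*(c/r) = c := by field_simp
  rw [this, ftil]
  ring

lemma hfun_eq_on (c r : ℝ) (hc : 1/4 < c) (hr0' : 0 < r) (hrc : c < r) :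
    ∀ s ∈ Set.uIcc (c/r) 1, hfun c r s = (r*s - c)/(r+s-1) := by
  intro s hs
  rw [Set.uIcc_of_le ((div_lt_one hr0').2 hrc).le] at hs
  have h1 : c ≤ r * s := by
    calc c = r * (c/r) := by field_simp
    _ ≤ r * s := by nlinarith [hs.1]
  rcases lt_or_eq_of_le h1 with h | h
  · simp [hfun, h]
  · simp [hfun, ← h]

lemma hfun_int (c r : ℝ) (hc : 1/4 < c) (hr : r ∈ Set.Icc (0:ℝ) 1) :
    ∫ s in (0:ℝ)..1, hfun c r s = phi c r := by
  obtain ⟨hr0, hr1⟩ := hr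
  by_cases hrc : c < r
  · have hc0 : (0:ℝ) < c := by linarith
    have hr0' : (0:ℝ) < r := lt_trans hc0 hrc
    have hcr0 : 0 ≤ c/r := by positivity
    have hcr1 : c/r ≤ 1 := ((div_lt_one hr0').2 hrc).le
    have heq0 : ∀ s ∈ Set.uIcc (0:ℝ) (c/r), hfun c r s = 0 := by
      intro s hs
      rw [Set.uIcc_of_le hcr0] at hs
      have : r * s ≤ c := by
        calc r * s ≤ r * (c/r) := by nlinarith [hs.2]
        _ = c := by field_simp
      simp [hfun, not_lt.2 this]
    have heq1 := hfun_eq_on c r hc hr0' hrc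
    have hcont : ContinuousOn (fun s => (r*s - c)/(r+s-1)) (Set.uIcc (c/r) 1) := by
      apply ContinuousOn.div (by fun_prop) (by fun_prop)
      intro s hs
      rw [Set.uIcc_of_le hcr1] at hs
      have hq : (0:ℝ) < r^2 - r + c := by nlinarith [sq_nonneg (r-1/2)]
      have h1 : c/r ≤ s := hs.1
      rw [div_le_iff₀ hr0'] at h1
      have : (r^2 - r + c)/r ≤ r + s - 1 := by
        rw [div_le_iff₀ hr0']; nlinarith
      nlinarith [div_pos hq hr0']
    have hi1 : IntervalIntegrable (hfun c r) MeasureTheory.volume 0 (c/r) := by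
      apply IntervalIntegrable.congr_ae (f := fun _ => (0:ℝ)) intervalIntegrable_const
      rw [Filter.EventuallyEq, MeasureTheory.ae_restrict_iff' measurableSet_uIoc]
      filter_upwards with s hs
      exact (heq0 s (Set.uIoc_subset_uIcc hs)).symm
    have hi2 : IntervalIntegrable (hfun c r) MeasureTheory.volume (c/r) 1 := by
      apply IntervalIntegrable.congr_ae (f := fun s => (r*s - c)/(r+s-1))
        hcont.intervalIntegrable
      rw [Filter.EventuallyEq, MeasureTheory.ae_restrict_iff' measurableSet_uIoc]
      filter_upwards with s hs
      exact (heq1 s (Set.uIoc_subset_uIcc hs)).symm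
    rw [← intervalIntegral.integral_add_adjacent_intervals hi1 hi2,
      intervalIntegral.integral_congr heq0, intervalIntegral.integral_congr heq1,
      intervalIntegral.integral_zero, zero_add, inner_s c r hc hr1 hrc, phi, if_pos hrc]
  · have : ∀ s ∈ Set.uIcc (0:ℝ) 1, hfun c r s = 0 := by
      intro s hs
      rw [Set.uIcc_of_le (by norm_num : (0:ℝ) ≤ 1)] at hs
      have : r * s ≤ c := by nlinarith [hs.1, hs.2, not_lt.1 hrc]
      simp [hfun, not_lt.2 this]
    rw [intervalIntegral.integral_congr this]
    simp [phi, hrc]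

lemma not_both (c r s : ℝ) (hc : 1/4 ≤ c) (hr : r ∈ Set.Icc (0:ℝ) 1)
    (hs : s ∈ Set.Icc (0:ℝ) 1) (h1 : c < r*s) : (1-r)*(1-s) ≤ c := by
  obtain ⟨hr0, hr1⟩ := hr; obtain ⟨hs0, hs1⟩ := hs
  nlinarith [mul_nonneg hr0 hs0, mul_nonneg (sub_nonneg.2 hr1) (sub_nonneg.2 hs1),
    sq_nonneg (r - s), sq_nonneg (r + s - 1), sq_nonneg (4*c-1),
    mul_nonneg (mul_nonneg hr0 hs0) (mul_nonneg (sub_nonneg.2 hr1) (sub_nonneg.2 hs1))]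

lemma denom_pos (c r s : ℝ) (hc : 1/4 ≤ c) (hr : r ∈ Set.Icc (0:ℝ) 1)
    (hs : s ∈ Set.Icc (0:ℝ) 1) (h1 : c < r*s) : 0 < r + s - 1 := by
  obtain ⟨hr0, hr1⟩ := hr; obtain ⟨hs0, hs1⟩ := hs
  by_contra h
  push_neg at h
  nlinarith [sq_nonneg (r - s)]

lemma hfun_bounds (c r s : ℝ) (hc : 1/4 ≤ c) (hr : r ∈ Set.Icc (0:ℝ) 1)
    (hs : s ∈ Set.Icc (0:ℝ) 1) : 0 ≤ hfun c r s ∧ hfun c r s ≤ 1 := by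
  rw [hfun]
  split_ifs with h1
  · have hd := denom_pos c r s hc hr hs h1
    constructor
    · apply div_nonneg (by linarith) hd.le
    · rw [div_le_one hd]
      have := not_both c r s hc hr hs h1
      nlinarith
  · norm_num

lemma slice1 (c r s : ℝ) (hc : 1/4 ≤ c) (hr : r ∈ Set.Icc (0:ℝ) 1)
    (hs : s ∈ Set.Icc (0:ℝ) 1) :
    MeasureTheory.volume {t : ℝ | t ∈ Set.Icc (0:ℝ) 1 ∧
        r*s*t + (1-r)*(1-s)*(1-t) ≤ c} =
      ENNReal.ofReal (1 - hfun c r s - hfun c (1-r) (1-s)) := by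
  obtain ⟨hr0, hr1⟩ := hr; obtain ⟨hs0, hs1⟩ := hs
  by_cases h1 : c < r*s
  · -- slice is Icc 0 m
    have hd := denom_pos c r s hc ⟨hr0, hr1⟩ ⟨hs0, hs1⟩ h1
    have hB := not_both c r s hc ⟨hr0, hr1⟩ ⟨hs0, hs1⟩ h1
    have h2 : ¬ c < (1-r)*(1-s) := not_lt.2 hB
    have hset : {t : ℝ | t ∈ Set.Icc (0:ℝ) 1 ∧ r*s*t + (1-r)*(1-s)*(1-t) ≤ c} =
        Set.Icc 0 ((c - (1-r)*(1-s))/(r+s-1)) := by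
      ext t
      simp only [Set.mem_setOf_eq, Set.mem_Icc]
      constructor
      · rintro ⟨⟨ht0, ht1⟩, hQ⟩
        refine ⟨ht0, ?_⟩
        rw [le_div_iff₀ hd]
        nlinarith
      · rintro ⟨ht0, htm⟩
        rw [le_div_iff₀ hd] at htm
        have ht1 : t ≤ 1 := by nlinarith
        exact ⟨⟨ht0, ht1⟩, by nlinarith⟩
    rw [hset, Real.volume_Icc]
    congr 1
    rw [hfun, if_pos h1, hfun, if_neg h2]
    field_simp
    ring
  · by_cases h2 : c < (1-r)*(1-s)
    · have hd : 0 < (1-r) + (1-s) - 1 :=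
        denom_pos c (1-r) (1-s) hc ⟨by linarith, by linarith⟩ ⟨by linarith, by linarith⟩ h2
      have hset : {t : ℝ | t ∈ Set.Icc (0:ℝ) 1 ∧ r*s*t + (1-r)*(1-s)*(1-t) ≤ c} =
          Set.Icc (((1-r)*(1-s) - c)/((1-r)+(1-s)-1)) 1 := by
        ext t
        simp only [Set.mem_setOf_eq, Set.mem_Icc]
        constructor
        · rintro ⟨⟨ht0, ht1⟩, hQ⟩
          refine ⟨?_, ht1⟩
          rw [div_le_iff₀ hd]
          nlinarith
        · rintro ⟨htm, ht1⟩
          rw [div_le_iff₀ hd] at htm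
          have ht0 : 0 ≤ t := by nlinarith [not_lt.1 h1]
          exact ⟨⟨ht0, ht1⟩, by nlinarith⟩
      rw [hset, Real.volume_Icc]
      congr 1
      rw [hfun, if_neg h1, hfun, if_pos h2]
      field_simp
      ring
    · have hset : {t : ℝ | t ∈ Set.Icc (0:ℝ) 1 ∧ r*s*t + (1-r)*(1-s)*(1-t) ≤ c} =
          Set.Icc (0:ℝ) 1 := by
        ext t
        simp only [Set.mem_setOf_eq, Set.mem_Icc]
        constructor
        · rintro ⟨ht, _⟩; exact ht
        · rintro ⟨ht0, ht1⟩
          refine ⟨⟨ht0, ht1⟩, ?_⟩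
          nlinarith [not_lt.1 h1, not_lt.1 h2]
      rw [hset, Real.volume_Icc]
      rw [hfun, if_neg h1, hfun, if_neg h2]
      norm_num


noncomputable def gfun (c r s : ℝ) : ℝ := 1 - hfun c r s - hfun c (1-r) (1-s)

lemma mem_flip {r : ℝ} (hr : r ∈ Set.Icc (0:ℝ) 1) : (1-r) ∈ Set.Icc (0:ℝ) 1 :=
  ⟨by linarith [hr.2], by linarith [hr.1]⟩

lemma gfun_bounds (c r s : ℝ) (hc : 1/4 ≤ c) (hr : r ∈ Set.Icc (0:ℝ) 1)
    (hs : s ∈ Set.Icc (0:ℝ) 1) : 0 ≤ gfun c r s ∧ gfun c r s ≤ 1 := by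
  have h1 := hfun_bounds c r s hc hr hs
  have h2 := hfun_bounds c (1-r) (1-s) hc (mem_flip hr) (mem_flip hs)
  constructor
  · rw [gfun]
    by_cases hcase : c < r*s
    · have : hfun c (1-r) (1-s) = 0 := by
        rw [hfun, if_neg (not_lt.2 (not_both c r s hc hr hs hcase))]
      rw [this]
      linarith [h1.2]
    · have : hfun c r s = 0 := by rw [hfun, if_neg hcase]
      rw [this]
      linarith [h2.2]
  · rw [gfun]; linarith [h1.1, h2.1]

lemma hfun_meas (c : ℝ) : Measurable (fun p : ℝ×ℝ => hfun c p.1 p.2) := by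
  apply Measurable.ite
  · exact measurableSet_lt measurable_const (measurable_fst.mul measurable_snd)
  · exact ((measurable_fst.mul measurable_snd).sub measurable_const).div
      ((measurable_fst.add measurable_snd).sub measurable_const)
  · exact measurable_const

lemma gfun_meas (c : ℝ) : Measurable (fun p : ℝ×ℝ => gfun c p.1 p.2) := by
  have h1 := hfun_meas c
  have h2 : Measurable (fun p : ℝ×ℝ => ((1:ℝ) - p.1, (1:ℝ) - p.2)) := by fun_prop
  exact (measurable_const.sub h1).sub (h1.comp h2)

open MeasureTheory in
lemma vol_as_integral (c : ℝ) (hc : 1/4 ≤ c) :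
    volume {p : ℝ × ℝ × ℝ | p ∈ Set.Icc (0:ℝ) 1 ×ˢ Set.Icc (0:ℝ) 1 ×ˢ Set.Icc (0:ℝ) 1 ∧
        p.1 * p.2.1 * p.2.2 + (1 - p.1) * (1 - p.2.1) * (1 - p.2.2) ≤ c} =
      ENNReal.ofReal (∫ r in Set.Icc (0:ℝ) 1, ∫ s in Set.Icc (0:ℝ) 1, gfun c r s) := by
  set I : Set ℝ := Set.Icc (0:ℝ) 1 with hI
  set S : Set (ℝ × ℝ × ℝ) := {p : ℝ × ℝ × ℝ | p ∈ I ×ˢ I ×ˢ I ∧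
    p.1 * p.2.1 * p.2.2 + (1 - p.1) * (1 - p.2.1) * (1 - p.2.2) ≤ c} with hS
  have hIm : MeasurableSet I := measurableSet_Icc
  have hSm : MeasurableSet S := by
    have : S = (I ×ˢ I ×ˢ I) ∩ {p : ℝ × ℝ × ℝ |
        p.1 * p.2.1 * p.2.2 + (1 - p.1) * (1 - p.2.1) * (1 - p.2.2) ≤ c} := by
      ext p; simp [hS, Set.mem_inter_iff, Set.mem_setOf_eq]
    rw [this]
    exact (hIm.prod (hIm.prod hIm)).inter (measurableSet_le (by fun_prop) measurable_const)
  have hinner : ∀ r s : ℝ, volume (Prod.mk s ⁻¹' (Prod.mk r ⁻¹' S)) =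
      Set.indicator (I ×ˢ I) (fun p : ℝ × ℝ => ENNReal.ofReal (gfun c p.1 p.2)) (r, s) := by
    intro r s
    by_cases hr : r ∈ I
    case neg =>
      have hset : Prod.mk s ⁻¹' (Prod.mk r ⁻¹' S) = (∅ : Set ℝ) := by
        ext t
        simp only [Set.mem_preimage, hS, Set.mem_setOf_eq, Set.mem_prod,
          Set.mem_empty_iff_false, iff_false]
        rintro ⟨⟨hr', -⟩, -⟩
        exact hr hr'
      rw [hset, measure_empty, Set.indicator_of_notMem]
      simp [hr]
    by_cases hs : s ∈ I
    case neg =>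
      have hset : Prod.mk s ⁻¹' (Prod.mk r ⁻¹' S) = (∅ : Set ℝ) := by
        ext t
        simp only [Set.mem_preimage, hS, Set.mem_setOf_eq, Set.mem_prod,
          Set.mem_empty_iff_false, iff_false]
        rintro ⟨⟨-, hs', -⟩, -⟩
        exact hs hs'
      rw [hset, measure_empty, Set.indicator_of_notMem]
      simp [hs]
    rw [Set.indicator_of_mem (Set.mk_mem_prod hr hs)]
    have hset : Prod.mk s ⁻¹' (Prod.mk r ⁻¹' S) =
        {t : ℝ | t ∈ Set.Icc (0:ℝ) 1 ∧ r*s*t + (1-r)*(1-s)*(1-t) ≤ c} := by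
      ext t
      constructor
      · rintro ⟨⟨-, -, h3⟩, h4⟩
        exact ⟨h3, h4⟩
      · rintro ⟨h3, h4⟩
        exact ⟨⟨hr, hs, h3⟩, h4⟩
    rw [hset, slice1 c r s hc hr hs, gfun]
  haveI hfin : IsFiniteMeasure (volume.restrict I : Measure ℝ) := by
    constructor
    rw [Measure.restrict_apply_univ, hI, Real.volume_Icc]
    norm_num
  have hmeasg := gfun_meas c
  have haemem : ∀ᵐ p : ℝ × ℝ ∂((volume.restrict I).prod (volume.restrict I)), p ∈ I ×ˢ I := by
    rw [Measure.prod_restrict]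
    exact ae_restrict_mem (hIm.prod hIm)
  have hInt : Integrable (fun p : ℝ × ℝ => gfun c p.1 p.2)
      ((volume.restrict I).prod (volume.restrict I)) := by
    apply Integrable.mono' (integrable_const (1:ℝ)) hmeasg.aestronglyMeasurable
    filter_upwards [haemem] with p hp
    obtain ⟨b1, b2⟩ := gfun_bounds c p.1 p.2 hc hp.1 hp.2
    rw [Real.norm_eq_abs, abs_le]
    exact ⟨by linarith, b2⟩
  have hnn : 0 ≤ᵐ[(volume.restrict I).prod (volume.restrict I)]
      (fun p : ℝ × ℝ => gfun c p.1 p.2) := by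
    filter_upwards [haemem] with p hp
    exact (gfun_bounds c p.1 p.2 hc hp.1 hp.2).1
  calc volume S = ∫⁻ r, volume.prod volume (Prod.mk r ⁻¹' S) := by
        rw [Measure.volume_eq_prod, Measure.prod_apply hSm]
        rfl
    _ = ∫⁻ r, ∫⁻ s, Set.indicator (I ×ˢ I)
          (fun p : ℝ × ℝ => ENNReal.ofReal (gfun c p.1 p.2)) (r, s) := by
        apply lintegral_congr
        intro r
        rw [Measure.prod_apply (measurable_prodMk_left hSm)]
        exact lintegral_congr (fun s => hinner r s)
    _ = ∫⁻ p : ℝ × ℝ, Set.indicator (I ×ˢ I)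
          (fun p : ℝ × ℝ => ENNReal.ofReal (gfun c p.1 p.2)) p ∂(volume.prod volume) := by
        rw [MeasureTheory.lintegral_prod]
        exact (((hmeasg.ennreal_ofReal).indicator (hIm.prod hIm)).aemeasurable)
    _ = ∫⁻ p : ℝ × ℝ in I ×ˢ I, ENNReal.ofReal (gfun c p.1 p.2) ∂(volume.prod volume) := by
        rw [lintegral_indicator (hIm.prod hIm)]
    _ = ∫⁻ p : ℝ × ℝ, ENNReal.ofReal (gfun c p.1 p.2)
          ∂((volume.restrict I).prod (volume.restrict I)) := by
        rw [Measure.prod_restrict]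
    _ = ENNReal.ofReal (∫ p : ℝ × ℝ, gfun c p.1 p.2
          ∂((volume.restrict I).prod (volume.restrict I))) :=
        (MeasureTheory.ofReal_integral_eq_lintegral_ofReal hInt hnn).symm
    _ = ENNReal.ofReal (∫ r in I, ∫ s in I, gfun c r s) := by
        rw [MeasureTheory.integral_prod _ hInt]

lemma ftil_contOn (c : ℝ) (hc : 1/4 < c) : ContinuousOn (ftil c) (Set.Icc c 1) := by
  have hcpos : (0:ℝ) < c := by linarith
  have hqpos : ∀ r : ℝ, 0 < r^2 - r + c := by
    intro r; nlinarith [sq_nonneg (r - 1/2)]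
  have hq : ContinuousOn (fun r : ℝ => r^2 - r + c) (Set.Icc c 1) := by fun_prop
  apply ContinuousOn.sub
  · apply ContinuousOn.sub (by fun_prop) hq
  · apply hq.mul
    apply ContinuousOn.sub
    · exact ContinuousOn.mul continuousOn_const
        (Real.continuousOn_log.comp (by fun_prop) (fun r hr => by
          simp only [Set.mem_compl_iff, Set.mem_singleton_iff]
          exact ne_of_gt (lt_of_lt_of_le hcpos hr.1)))
    · exact Real.continuousOn_log.comp hq (fun r hr => by
        simp only [Set.mem_compl_iff, Set.mem_singleton_iff]
        exact ne_of_gt (hqpos r))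

lemma ftil_at_c (c : ℝ) (hc : 0 < c) : ftil c c = 0 := by
  rw [ftil, show c^2 - c + c = c^2 by ring, show (c:ℝ)^2 = c*c by ring,
    Real.log_mul hc.ne' hc.ne']
  ring

lemma hfun_intble (c r : ℝ) (hc : 1/4 < c) (hr : r ∈ Set.Icc (0:ℝ) 1) :
    IntervalIntegrable (hfun c r) MeasureTheory.volume 0 1 := by
  obtain ⟨hr0, hr1⟩ := hr
  by_cases hrc : c < r
  · have hc0 : (0:ℝ) < c := by linarith
    have hr0' : (0:ℝ) < r := lt_trans hc0 hrc
    have hcr0 : 0 ≤ c/r := by positivity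
    have hcr1 : c/r ≤ 1 := ((div_lt_one hr0').2 hrc).le
    have heq0 : ∀ s ∈ Set.uIcc (0:ℝ) (c/r), hfun c r s = 0 := by
      intro s hs
      rw [Set.uIcc_of_le hcr0] at hs
      have : r * s ≤ c := by
        calc r * s ≤ r * (c/r) := by nlinarith [hs.2]
        _ = c := by field_simp
      simp [hfun, not_lt.2 this]
    have heq1 := hfun_eq_on c r hc hr0' hrc
    have hcont : ContinuousOn (fun s => (r*s - c)/(r+s-1)) (Set.uIcc (c/r) 1) := by
      apply ContinuousOn.div (by fun_prop) (by fun_prop)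
      intro s hs
      rw [Set.uIcc_of_le hcr1] at hs
      have hq : (0:ℝ) < r^2 - r + c := by nlinarith [sq_nonneg (r-1/2)]
      have h1 : c/r ≤ s := hs.1
      rw [div_le_iff₀ hr0'] at h1
      have : (r^2 - r + c)/r ≤ r + s - 1 := by
        rw [div_le_iff₀ hr0']; nlinarith
      nlinarith [div_pos hq hr0']
    have hi1 : IntervalIntegrable (hfun c r) MeasureTheory.volume 0 (c/r) := by
      apply IntervalIntegrable.congr_ae (f := fun _ => (0:ℝ)) intervalIntegrable_const
      rw [Filter.EventuallyEq, MeasureTheory.ae_restrict_iff' measurableSet_uIoc]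
      filter_upwards with s hs
      exact (heq0 s (Set.uIoc_subset_uIcc hs)).symm
    have hi2 : IntervalIntegrable (hfun c r) MeasureTheory.volume (c/r) 1 := by
      apply IntervalIntegrable.congr_ae (f := fun s => (r*s - c)/(r+s-1))
        hcont.intervalIntegrable
      rw [Filter.EventuallyEq, MeasureTheory.ae_restrict_iff' measurableSet_uIoc]
      filter_upwards with s hs
      exact (heq1 s (Set.uIoc_subset_uIcc hs)).symm
    exact hi1.trans hi2
  · apply IntervalIntegrable.congr_ae (f := fun _ => (0:ℝ)) intervalIntegrable_const
    rw [Filter.EventuallyEq, MeasureTheory.ae_restrict_iff' measurableSet_uIoc]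
    filter_upwards with s hs
    rw [Set.uIoc_of_le (by norm_num : (0:ℝ) ≤ 1)] at hs
    have : r * s ≤ c := by nlinarith [hs.1.le, hs.2, not_lt.1 hrc]
    simp [hfun, not_lt.2 this]

lemma inner_integral (c r : ℝ) (hc : 1/4 < c) (hr : r ∈ Set.Icc (0:ℝ) 1) :
    ∫ s in Set.Icc (0:ℝ) 1, gfun c r s = 1 - phi c r - phi c (1-r) := by
  rw [MeasureTheory.integral_Icc_eq_integral_Ioc,
    ← intervalIntegral.integral_of_le (by norm_num : (0:ℝ) ≤ 1)]
  have hi1 := hfun_intble c r hc hr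
  have hi2 : IntervalIntegrable (fun s => hfun c (1-r) (1-s)) MeasureTheory.volume 0 1 := by
    have := ((hfun_intble c (1-r) hc (mem_flip hr)).comp_sub_left 1).symm
    simpa using this
  have hsplit : ∀ s : ℝ, gfun c r s = 1 - (hfun c r s + hfun c (1-r) (1-s)) := by
    intro s; rw [gfun]; ring
  simp_rw [hsplit]
  rw [intervalIntegral.integral_sub intervalIntegrable_const (hi1.add hi2),
    intervalIntegral.integral_add hi1 hi2, hfun_int c r hc hr]
  have : ∫ s in (0:ℝ)..1, hfun c (1-r) (1-s) = ∫ s in (0:ℝ)..1, hfun c (1-r) s := by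
    have := intervalIntegral.integral_comp_sub_left (a := (0:ℝ)) (b := (1:ℝ))
      (hfun c (1-r)) 1
    simpa using this
  rw [this, hfun_int c (1-r) hc (mem_flip hr)]
  simp
  ring

lemma phi_intble (c : ℝ) (hc : 1/4 < c) (hc1 : c ≤ 1) :
    IntervalIntegrable (phi c) MeasureTheory.volume 0 1 := by
  have hc0 : (0:ℝ) < c := by linarith
  have hi1 : IntervalIntegrable (phi c) MeasureTheory.volume 0 c := by
    apply IntervalIntegrable.congr_ae (f := fun _ => (0:ℝ)) intervalIntegrable_const
    rw [Filter.EventuallyEq, MeasureTheory.ae_restrict_iff' measurableSet_uIoc]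
    filter_upwards with r hr
    rw [Set.uIoc_of_le hc0.le] at hr
    simp [phi, not_lt.2 hr.2]
  have hi2 : IntervalIntegrable (phi c) MeasureTheory.volume c 1 := by
    apply IntervalIntegrable.congr_ae (f := ftil c)
      (((ftil_contOn c hc).mono (by rw [Set.uIcc_of_le hc1])).intervalIntegrable)
    rw [Filter.EventuallyEq, MeasureTheory.ae_restrict_iff' measurableSet_uIoc]
    filter_upwards with r hr
    rw [Set.uIoc_of_le hc1] at hr
    simp [phi, hr.1]
  exact hi1.trans hi2

lemma phi_int (c : ℝ) (hc : 1/4 < c) (hc1 : c ≤ 1) :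
    ∫ r in (0:ℝ)..1, phi c r =
      1/2 - c/2 + (3/2)*(c-1/6)*Real.log c
        - (4*c-1)^((3:ℝ)/2)/2 * (Real.arctan (Real.sqrt (4*c-1)) - π/3) := by
  have hc0 : (0:ℝ) < c := by linarith
  have heq0 : ∀ r ∈ Set.uIcc (0:ℝ) c, phi c r = 0 := by
    intro r hr
    rw [Set.uIcc_of_le hc0.le] at hr
    simp [phi, not_lt.2 hr.2]
  have heq1 : ∀ r ∈ Set.uIcc c 1, phi c r = ftil c r := by
    intro r hr
    rw [Set.uIcc_of_le hc1] at hr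
    rcases lt_or_eq_of_le hr.1 with h | h
    · simp [phi, h]
    · rw [phi, ← h, if_neg (lt_irrefl c), ftil_at_c c hc0]
  have hi1 : IntervalIntegrable (phi c) MeasureTheory.volume 0 c := by
    apply IntervalIntegrable.congr_ae (f := fun _ => (0:ℝ)) intervalIntegrable_const
    rw [Filter.EventuallyEq, MeasureTheory.ae_restrict_iff' measurableSet_uIoc]
    filter_upwards with r hr
    exact (heq0 r (Set.uIoc_subset_uIcc hr)).symm
  have hi2 : IntervalIntegrable (phi c) MeasureTheory.volume c 1 := by
    apply IntervalIntegrable.congr_ae (f := ftil c)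
      (((ftil_contOn c hc).mono (by rw [Set.uIcc_of_le hc1])).intervalIntegrable)
    rw [Filter.EventuallyEq, MeasureTheory.ae_restrict_iff' measurableSet_uIoc]
    filter_upwards with r hr
    exact (heq1 r (Set.uIoc_subset_uIcc hr)).symm
  rw [← intervalIntegral.integral_add_adjacent_intervals hi1 hi2,
    intervalIntegral.integral_congr heq0, intervalIntegral.integral_congr heq1,
    intervalIntegral.integral_zero, zero_add, Jlemma c hc hc1]

lemma double_int (c : ℝ) (hc : 1/4 < c) (hc1 : c ≤ 1) :
    ∫ r in Set.Icc (0:ℝ) 1, ∫ s in Set.Icc (0:ℝ) 1, gfun c r s =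
      c - (3 * c - 1 / 2) * Real.log c +
        (4 * c - 1) ^ ((3 : ℝ) / 2) * (Real.arctan (Real.sqrt (4 * c - 1)) - π / 3) := by
  rw [MeasureTheory.setIntegral_congr_fun measurableSet_Icc
    (fun r hr => inner_integral c r hc hr)]
  rw [MeasureTheory.integral_Icc_eq_integral_Ioc,
    ← intervalIntegral.integral_of_le (by norm_num : (0:ℝ) ≤ 1)]
  have hp := phi_intble c hc hc1
  have hp2 : IntervalIntegrable (fun r => phi c (1-r)) MeasureTheory.volume 0 1 := by
    have := (hp.comp_sub_left 1).symm
    simpa using this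
  rw [intervalIntegral.integral_sub (intervalIntegrable_const.sub hp) hp2,
    intervalIntegral.integral_sub intervalIntegrable_const hp]
  have : ∫ r in (0:ℝ)..1, phi c (1-r) = ∫ r in (0:ℝ)..1, phi c r := by
    have := intervalIntegral.integral_comp_sub_left (a := (0:ℝ)) (b := (1:ℝ)) (phi c) 1
    simpa using this
  rw [this, phi_int c hc hc1]
  simp
  ring

noncomputable def rhs (c : ℝ) : ℝ :=
  c - (3 * c - 1 / 2) * Real.log c +
    (4 * c - 1) ^ ((3 : ℝ) / 2) * (Real.arctan (Real.sqrt (4 * c - 1)) - π / 3)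

noncomputable def Sset (c : ℝ) : Set (ℝ × ℝ × ℝ) :=
  {p : ℝ × ℝ × ℝ | p ∈ Set.Icc (0:ℝ) 1 ×ˢ Set.Icc (0:ℝ) 1 ×ˢ Set.Icc (0:ℝ) 1 ∧
    p.1 * p.2.1 * p.2.2 + (1 - p.1) * (1 - p.2.1) * (1 - p.2.2) ≤ c}

lemma Sset_meas (c : ℝ) : MeasurableSet (Sset c) := by
  have : Sset c = (Set.Icc (0:ℝ) 1 ×ˢ Set.Icc (0:ℝ) 1 ×ˢ Set.Icc (0:ℝ) 1) ∩
      {p : ℝ × ℝ × ℝ | p.1 * p.2.1 * p.2.2 + (1 - p.1) * (1 - p.2.1) * (1 - p.2.2) ≤ c} := by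
    ext p; simp [Sset, Set.mem_inter_iff, Set.mem_setOf_eq]
  rw [this]
  exact (measurableSet_Icc.prod (measurableSet_Icc.prod measurableSet_Icc)).inter
    (measurableSet_le (by fun_prop) measurable_const)

lemma main_gt (c : ℝ) (hc : 1/4 < c) (hc1 : c ≤ 1) :
    (MeasureTheory.volume (Sset c)).toReal = rhs c := by
  rw [Sset, vol_as_integral c hc.le, ENNReal.toReal_ofReal, double_int c hc hc1, rhs]
  apply MeasureTheory.setIntegral_nonneg measurableSet_Icc
  intro r hr
  apply MeasureTheory.setIntegral_nonneg measurableSet_Icc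
  intro s hs
  exact (gfun_bounds c r s hc.le hr hs).1

lemma rhs_contAt : ContinuousAt rhs (1/4) := by
  unfold rhs
  apply ContinuousAt.add
  · apply ContinuousAt.sub continuousAt_id
    apply ContinuousAt.mul (by fun_prop)
    exact (Real.continuousAt_log (by norm_num)).comp (by fun_prop)
  · apply ContinuousAt.mul
    · have hlin : ContinuousAt (fun c : ℝ => 4*c-1) (1/4) := by fun_prop
      have h0 : ContinuousAt (fun x : ℝ => x ^ ((3:ℝ)/2)) ((fun c : ℝ => 4*c-1) (1/4)) := by
        have he : (fun c : ℝ => 4*c-1) (1/4) = 0 := by norm_num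
        rw [he]
        exact Real.continuousAt_rpow_const 0 ((3:ℝ)/2) (Or.inr (by norm_num))
      exact ContinuousAt.comp (f := fun c : ℝ => 4*c-1) (x := (1/4:ℝ)) h0 hlin
    · apply ContinuousAt.sub _ continuousAt_const
      exact Real.continuous_arctan.continuousAt.comp
        (Real.continuous_sqrt.continuousAt.comp (by fun_prop))

lemma main_quarter : (MeasureTheory.volume (Sset (1/4))).toReal = rhs (1/4) := by
  set cseq : ℕ → ℝ := fun n => 1/4 + (1/2) * (1/(n+1)) with hcseq
  have hcseq_mem : ∀ n, 1/4 < cseq n ∧ cseq n ≤ 1 := by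
    intro n
    have h1 : (0:ℝ) < 1/((n:ℝ)+1) := by positivity
    have h2 : 1/((n:ℝ)+1) ≤ 1 := by
      rw [div_le_one (by positivity)]
      simp [Nat.one_le_cast]
    constructor
    · simp only [hcseq]; linarith
    · simp only [hcseq]; linarith
  have hiInter : Sset (1/4) = ⋂ n, Sset (cseq n) := by
    ext p
    simp only [Set.mem_iInter, Sset, Set.mem_setOf_eq]
    constructor
    · intro ⟨h1, h2⟩ n
      exact ⟨h1, le_trans h2 (hcseq_mem n).1.le⟩
    · intro h
      refine ⟨(h 0).1, ?_⟩
      apply le_of_forall_pos_le_add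
      intro ε hε
      obtain ⟨n, hn⟩ := exists_nat_one_div_lt (ε := 2*ε) (by linarith)
      have hle : cseq n ≤ 1/4 + ε := by
        simp only [hcseq]
        have : (1:ℝ)/((n:ℝ)+1) < 2*ε := by exact_mod_cast hn
        linarith
      exact le_trans (h n).2 hle
  have hanti : Antitone (fun n => Sset (cseq n)) := by
    intro n m hnm p hp
    obtain ⟨h1, h2⟩ := hp
    refine ⟨h1, le_trans h2 ?_⟩
    simp only [hcseq]
    have : (1:ℝ)/((m:ℝ)+1) ≤ 1/((n:ℝ)+1) := by
      apply one_div_le_one_div_of_le (by positivity)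
      have : (n:ℝ) ≤ (m:ℝ) := by exact_mod_cast hnm
      linarith
    linarith
  have hfin : ∀ n, MeasureTheory.volume (Sset (cseq n)) ≠ ⊤ := by
    intro n
    rw [Sset, vol_as_integral (cseq n) (hcseq_mem n).1.le]
    exact ENNReal.ofReal_ne_top
  have htends : Filter.Tendsto (fun n => MeasureTheory.volume (Sset (cseq n)))
      Filter.atTop (nhds (MeasureTheory.volume (Sset (1/4)))) := by
    rw [hiInter]
    exact MeasureTheory.tendsto_measure_iInter_atTop
      (fun n => (Sset_meas (cseq n)).nullMeasurableSet) hanti ⟨0, hfin 0⟩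
  have hlimfin : MeasureTheory.volume (Sset (1/4)) ≠ ⊤ := by
    rw [hiInter]
    exact ne_top_of_le_ne_top (hfin 0)
      (MeasureTheory.measure_mono (Set.iInter_subset _ 0))
  have htoReal : Filter.Tendsto (fun n => (MeasureTheory.volume (Sset (cseq n))).toReal)
      Filter.atTop (nhds ((MeasureTheory.volume (Sset (1/4))).toReal)) :=
    (ENNReal.tendsto_toReal hlimfin).comp htends
  have heq : ∀ n, (MeasureTheory.volume (Sset (cseq n))).toReal = rhs (cseq n) :=
    fun n => main_gt (cseq n) (hcseq_mem n).1 (hcseq_mem n).2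
  have hrhs : Filter.Tendsto (fun n => rhs (cseq n)) Filter.atTop (nhds (rhs (1/4))) := by
    apply rhs_contAt.tendsto.comp
    have : Filter.Tendsto cseq Filter.atTop (nhds (1/4 + (1/2) * 0)) := by
      apply Filter.Tendsto.const_add
      exact tendsto_one_div_add_atTop_nhds_zero_nat.const_mul (1/2)
    simpa using this
  rw [show (fun n => (MeasureTheory.volume (Sset (cseq n))).toReal) = fun n => rhs (cseq n)
    from funext heq] at htoReal
  exact tendsto_nhds_unique htoReal hrhs

/-- For `1/4 ≤ c ≤ 1`, the volume of
`{(r,s,t) ∈ [0,1]³ : r·s·t + (1−r)·(1−s)·(1−t) ≤ c}` is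
`c − (3c − 1/2)·ln c + (4c − 1)^{3/2}·(arctan √(4c − 1) − π/3)`. -/
theorem cdf_right (c : ℝ) (hc0 : 1 / 4 ≤ c) (hc : c ≤ 1) :
    (volume {p : ℝ × ℝ × ℝ | p ∈ Set.Icc (0:ℝ) 1 ×ˢ Set.Icc (0:ℝ) 1 ×ˢ Set.Icc (0:ℝ) 1 ∧
        p.1 * p.2.1 * p.2.2 + (1 - p.1) * (1 - p.2.1) * (1 - p.2.2) ≤ c}).toReal =
      c - (3 * c - 1 / 2) * Real.log c +
        (4 * c - 1) ^ ((3 : ℝ) / 2) * (Real.arctan (Real.sqrt (4 * c - 1)) - π / 3) := by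
  rcases eq_or_lt_of_le hc0 with h | h
  · rw [show ({p : ℝ × ℝ × ℝ | p ∈ Set.Icc (0:ℝ) 1 ×ˢ Set.Icc (0:ℝ) 1 ×ˢ Set.Icc (0:ℝ) 1 ∧
        p.1 * p.2.1 * p.2.2 + (1 - p.1) * (1 - p.2.1) * (1 - p.2.2) ≤ c}) = Sset c from rfl]
    rw [← h, main_quarter]
    rfl
  · exact main_gt c h hc
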